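/- Let f ∈ ℝ₊ᴺ with weights Δvᵢ > 0 and ∑ᵢ fᵢ Δvᵢ = ∑ᵢ Δvᵢ = V. Then (1/(2‖f‖_∞)) ∑ᵢ (fᵢ − 1)² Δvᵢ ≤ ∑ᵢ fᵢ log fᵢ Δvᵢ ≤ ∑ᵢ (fᵢ − 1)² Δvᵢ. -/

import Mathlib

open Real Set

lemma phi_upper (x : ℝ) (hx : 0 ≤ x) : x * Real.log x - x + 1 ≤ (x - 1) ^ 2 := by
  rcases hx.eq_or_lt with h | h
  · simp [← h]
  · have hlog := Real.log_le_sub_one_of_pos h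
    nlinarith [mul_le_mul_of_nonneg_left hlog hx]

lemma phi_lower_le_one (x : ℝ) (hx0 : 0 ≤ x) (hx1 : x ≤ 1) :
    (x - 1) ^ 2 / 2 ≤ x * Real.log x - x + 1 := by
  set g : ℝ → ℝ := fun y => y * Real.log y - y + 1 - (y - 1) ^ 2 / 2 with hg
  have hanti : AntitoneOn g (Icc 0 1) := by
    apply antitoneOn_of_deriv_nonpos (convex_Icc 0 1)
    · exact ((Real.continuous_mul_log.sub continuous_id).add continuous_const).sub
        (((continuous_id.sub continuous_const).pow 2).div_const 2) |>.continuousOn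
    · intro y hy
      rw [interior_Icc] at hy
      have hd : HasDerivAt g (Real.log y + 1 - 1 - 2 * (y - 1) / 2) y := by
        have h1 := Real.hasDerivAt_mul_log (ne_of_gt hy.1)
        have h2 : HasDerivAt (fun y : ℝ => (y - 1) ^ 2 / 2) (2 * (y - 1) / 2) y := by
          have := ((hasDerivAt_id y).sub_const 1).pow 2
          simpa using this.div_const 2
        simpa [Pi.sub_def, hg] using ((h1.sub (hasDerivAt_id y)).add_const 1).sub h2
      exact hd.differentiableAt.differentiableWithinAt
    · intro y hy
      rw [interior_Icc] at hy
      have hd : HasDerivAt g (Real.log y + 1 - 1 - 2 * (y - 1) / 2) y := by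
        have h1 := Real.hasDerivAt_mul_log (ne_of_gt hy.1)
        have h2 : HasDerivAt (fun y : ℝ => (y - 1) ^ 2 / 2) (2 * (y - 1) / 2) y := by
          have := ((hasDerivAt_id y).sub_const 1).pow 2
          simpa using this.div_const 2
        simpa [Pi.sub_def, hg] using ((h1.sub (hasDerivAt_id y)).add_const 1).sub h2
      rw [hd.deriv]
      have := Real.log_le_sub_one_of_pos hy.1
      linarith
  have h := hanti (mem_Icc.2 ⟨hx0, hx1⟩) (mem_Icc.2 ⟨zero_le_one, le_refl 1⟩) hx1
  simp [hg] at h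
  linarith

lemma phi_lower_ge_one (x : ℝ) (hx : 1 ≤ x) :
    (x - 1) ^ 2 / (2 * x) ≤ x * Real.log x - x + 1 := by
  set H : ℝ → ℝ := fun y => y * Real.log y - y * (3 / 2) + 2 - y⁻¹ * 2⁻¹ with hH
  have hmono : MonotoneOn H (Ici 1) := by
    apply monotoneOn_of_deriv_nonneg (convex_Ici 1)
    · intro y hy
      have hy0 : (0 : ℝ) < y := lt_of_lt_of_le one_pos hy
      have hd : HasDerivAt H (Real.log y + 1 - 3 / 2 - (1 / 2) * (-(y ^ 2)⁻¹)) y := by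
        have h1 := Real.hasDerivAt_mul_log (ne_of_gt hy0)
        have h2 := (hasDerivAt_inv (ne_of_gt hy0)).const_mul (1 / 2 : ℝ)
        simpa [mul_comm, Pi.sub_def, hH] using (((h1.sub ((hasDerivAt_id y).const_mul (3 / 2))).add_const 2).sub h2)
      exact (hd.differentiableAt.continuousAt).continuousWithinAt
    · intro y hy
      rw [interior_Ici] at hy
      have hy0 : (0 : ℝ) < y := lt_trans one_pos hy
      have hd : HasDerivAt H (Real.log y + 1 - 3 / 2 - (1 / 2) * (-(y ^ 2)⁻¹)) y := by
        have h1 := Real.hasDerivAt_mul_log (ne_of_gt hy0)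
        have h2 := (hasDerivAt_inv (ne_of_gt hy0)).const_mul (1 / 2 : ℝ)
        simpa [mul_comm, Pi.sub_def, hH] using (((h1.sub ((hasDerivAt_id y).const_mul (3 / 2))).add_const 2).sub h2)
      exact hd.differentiableAt.differentiableWithinAt
    · intro y hy
      rw [interior_Ici] at hy
      have hy0 : (0 : ℝ) < y := lt_trans one_pos hy
      have hd : HasDerivAt H (Real.log y + 1 - 3 / 2 - (1 / 2) * (-(y ^ 2)⁻¹)) y := by
        have h1 := Real.hasDerivAt_mul_log (ne_of_gt hy0)
        have h2 := (hasDerivAt_inv (ne_of_gt hy0)).const_mul (1 / 2 : ℝ)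
        simpa [mul_comm, Pi.sub_def, hH] using (((h1.sub ((hasDerivAt_id y).const_mul (3 / 2))).add_const 2).sub h2)
      rw [hd.deriv]
      -- log y ≥ (1 - 1/y²)/2
      have hy2 : (0:ℝ) < y ^ 2 := by positivity
      have hlog2 : 1 - (y ^ 2)⁻¹ ≤ Real.log (y ^ 2) := Real.one_sub_inv_le_log_of_pos hy2
      have : Real.log (y ^ 2) = 2 * Real.log y := by
        rw [sq, Real.log_mul (ne_of_gt hy0) (ne_of_gt hy0)]; ring
      rw [this] at hlog2
      linarith
  have h := hmono (mem_Ici.2 (le_refl 1)) (mem_Ici.2 hx) hx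
  have hx0 : (0:ℝ) < x := lt_of_lt_of_le one_pos hx
  simp [hH] at h
  have hxi : x * x⁻¹ = 1 := mul_inv_cancel₀ (ne_of_gt hx0)
  rw [div_le_iff₀ (by positivity : (0:ℝ) < 2 * x)]
  have hkey : ((3:ℝ)/2) * x - 2 + x⁻¹ * 2⁻¹ ≤ x * Real.log x := by linarith
  nlinarith [mul_le_mul_of_nonneg_right hkey (le_of_lt hx0), hxi]


lemma phi_lower (x M : ℝ) (hx : 0 ≤ x) (hM : 1 ≤ M) (hxM : x ≤ M) :
    (x - 1) ^ 2 / (2 * M) ≤ x * Real.log x - x + 1 := by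
  have hM0 : (0:ℝ) < M := lt_of_lt_of_le one_pos hM
  rcases le_total x 1 with h1 | h1
  · calc (x - 1) ^ 2 / (2 * M) ≤ (x - 1) ^ 2 / 2 := by
          apply div_le_div_of_nonneg_left (by positivity) (by norm_num) (by linarith)
       _ ≤ _ := phi_lower_le_one x hx h1
  · calc (x - 1) ^ 2 / (2 * M) ≤ (x - 1) ^ 2 / (2 * x) := by
          apply div_le_div_of_nonneg_left (by positivity) (by linarith) (by linarith)
       _ ≤ _ := phi_lower_ge_one x h1

/-- Two-sided bound between the entropy `η(f) = ∑ i, f i * log (f i) * Δv i`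
and the weighted L² distance to the all-ones vector. -/
theorem entropy_equiv_two_norm
    (N : ℕ) (hN : 0 < N) (Δv f : Fin N → ℝ)
    (hΔv : ∀ i, 0 < Δv i) (hf : ∀ i, 0 ≤ f i)
    (hmass : (∑ i, f i * Δv i) = ∑ i, Δv i) :
    (1 / (2 * ⨆ i, f i)) * (∑ i, (f i - 1) ^ 2 * Δv i) ≤
        (∑ i, f i * Real.log (f i) * Δv i) ∧
    (∑ i, f i * Real.log (f i) * Δv i) ≤ ∑ i, (f i - 1) ^ 2 * Δv i := by
  haveI : Nonempty (Fin N) := ⟨⟨0, hN⟩⟩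
  set M := ⨆ i, f i with hM
  have hMf : ∀ i, f i ≤ M := fun i => le_ciSup (Set.Finite.bddAbove (Set.finite_range f)) i
  have hM1 : (1:ℝ) ≤ M := by
    by_contra h
    push_neg at h
    have : (∑ i, f i * Δv i) < ∑ i, Δv i := by
      apply Finset.sum_lt_sum_of_nonempty Finset.univ_nonempty
      intro i _
      have : f i < 1 := lt_of_le_of_lt (hMf i) h
      nlinarith [hΔv i]
    linarith [hmass ▸ this]
  have hsum0 : ∑ i, (1 - f i) * Δv i = 0 := by
    simp only [sub_mul, one_mul, Finset.sum_sub_distrib]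
    rw [hmass]; ring
  have heq : (∑ i, f i * Real.log (f i) * Δv i) =
      ∑ i, (f i * Real.log (f i) - f i + 1) * Δv i := by
    rw [← add_zero (∑ i, f i * Real.log (f i) * Δv i), ← hsum0, ← Finset.sum_add_distrib]
    congr 1; ext i; ring
  constructor
  · rw [heq]
    have : (1 / (2 * M)) * (∑ i, (f i - 1) ^ 2 * Δv i)
        = ∑ i, ((f i - 1) ^ 2 / (2 * M)) * Δv i := by
      rw [Finset.mul_sum]; congr 1; ext i; ring
    rw [this]
    apply Finset.sum_le_sum
    intro i _
    exact mul_le_mul_of_nonneg_right (phi_lower (f i) M (hf i) hM1 (hMf i)) (hΔv i).le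
  · rw [heq]
    apply Finset.sum_le_sum
    intro i _
    exact mul_le_mul_of_nonneg_right (phi_upper (f i) (hf i)) (hΔv i).le
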